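/- Let F be a finite field of odd characteristic and let a, t ∈ F with t ≠ 0 and (a+1)·(t²+1)·((a−1)t²+(a+1)) ≠ 0. If there exists b ∈ F with b² = 2(a+1)(t²+1), then the number of pairs (x,y) ∈ F × F satisfying y² = x³ + 2((a+1)/t² + a)·x² + x is congruent to 3 modulo 4. (Equivalently, 4 divides the total number of F-points of the elliptic curve E_{a,t}, including the point at infinity.) -/

import Mathlib

open WeierstrassCurve

namespace VGTaux

variable {F : Type*} [Field F]

/-- coordinate-change lemma for `Point.some`. -/
lemma some_eq_some {W : Affine F} {x y x' y' : F} (h : W.Nonsingular x y)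
    (h' : W.Nonsingular x' y') (hx : x = x') (hy : y = y') :
    Affine.Point.some _ _ h = Affine.Point.some _ _ h' := by
  subst hx; subst hy; rfl

/-- injection into Option (F × F) -/
def toOpt {W : Affine F} : W.Point → Option (F × F)
  | .zero => none
  | @Affine.Point.some _ _ _ x y _ => some (x, y)

lemma toOpt_inj {W : Affine F} : Function.Injective (toOpt (W := W)) := by
  rintro (_ | @⟨x, y, h⟩) (_ | @⟨x', y', h'⟩) hPQ <;> simp [toOpt] at hPQ ⊢
  obtain ⟨rfl, rfl⟩ := hPQ
  constructor <;> rfl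

end VGTaux

theorem vanGeemenTop_affine_point_count_mod_four {F : Type*} [Field F] [Fintype F]
    (hchar : ringChar F ≠ 2) (a t : F) (ht : t ≠ 0)
    (hΔ : (a + 1) * (t ^ 2 + 1) * ((a - 1) * t ^ 2 + (a + 1)) ≠ 0)
    (hsq : ∃ b : F, b ^ 2 = 2 * (a + 1) * (t ^ 2 + 1)) :
    Nat.card {p : F × F //
      p.2 ^ 2 = p.1 ^ 3 + 2 * ((a + 1) / t ^ 2 + a) * p.1 ^ 2 + p.1} % 4 = 3 := by
  classical
  have h2 : (2 : F) ≠ 0 := Ring.two_ne_zero hchar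
  set c : F := 2 * ((a + 1) / t ^ 2 + a) with hc
  set W : Affine F := { a₁ := 0, a₂ := c, a₃ := 0, a₄ := 1, a₆ := 0 } with hW
  have ha1 : (a + 1) ≠ 0 := fun h => hΔ (by rw [h]; ring)
  have ht1 : (t ^ 2 + 1) ≠ 0 := fun h => hΔ (by rw [h]; ring)
  have ha2 : (a - 1) * t ^ 2 + (a + 1) ≠ 0 := fun h => hΔ (by rw [h]; ring)
  have ht2 : (t : F) ^ 2 ≠ 0 := pow_ne_zero 2 ht
  have hc2 : c + 2 = 2 * (a + 1) * (t ^ 2 + 1) / t ^ 2 := by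
    rw [hc]; field_simp; ring
  have hcm2 : c - 2 = 2 * ((a - 1) * t ^ 2 + (a + 1)) / t ^ 2 := by
    rw [hc]; field_simp; ring
  have hc2ne : c + 2 ≠ 0 := by
    rw [hc2]
    exact div_ne_zero (mul_ne_zero (mul_ne_zero h2 ha1) ht1) ht2
  have hcm2ne : c - 2 ≠ 0 := by
    rw [hcm2]
    exact div_ne_zero (mul_ne_zero h2 ha2) ht2
  -- Δ ≠ 0
  have hWΔ : W.Δ ≠ 0 := by
    have hΔval : W.Δ = 16 * ((c + 2) * (c - 2)) := by
      simp [WeierstrassCurve.Δ, b₂, b₄, b₆, b₈, hW]; ring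
    have h16 : (16 : F) ≠ 0 := by
      have : (16 : F) = 2 ^ 4 := by norm_num
      rw [this]; exact pow_ne_zero _ h2
    rw [hΔval]
    exact mul_ne_zero h16 (mul_ne_zero hc2ne hcm2ne)
  -- equation translation
  have heqn : ∀ x y : F, W.Equation x y ↔ y ^ 2 = x ^ 3 + c * x ^ 2 + x := by
    intro x y
    rw [Affine.equation_iff]
    simp [hW]
  -- the 2-torsion point (0,0)
  have h00 : W.Nonsingular 0 0 :=
    (Affine.equation_iff_nonsingular_of_Δ_ne_zero (W := W) hWΔ).mp ((heqn 0 0).mpr (by ring))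
  set P₀ : W.Point := Affine.Point.some _ _ h00 with hP₀
  -- the point (1, y₁) of order 4
  obtain ⟨b, hb⟩ := hsq
  have hbne : b ≠ 0 := by
    intro h
    rw [h] at hb
    exact (mul_ne_zero (mul_ne_zero h2 ha1) ht1) (by rw [← hb]; ring)
  set y₁ : F := b / t with hy₁
  have hy₁sq : y₁ ^ 2 = c + 2 := by
    rw [hy₁, hc2, div_pow, hb]
  have hy₁ne : y₁ ≠ 0 := div_ne_zero hbne ht
  have hQns : W.Nonsingular 1 y₁ :=
    (Affine.equation_iff_nonsingular_of_Δ_ne_zero (W := W) hWΔ).mp ((heqn 1 y₁).mpr (by rw [hy₁sq]; ring))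
  set Q : W.Point := Affine.Point.some _ _ hQns with hQ
  -- negY facts
  have hnegY : W.negY 1 y₁ = -y₁ := by simp [Affine.negY, hW]
  have hyne : y₁ ≠ W.negY 1 y₁ := by
    rw [hnegY]
    intro h
    apply hy₁ne
    have : 2 * y₁ = 0 := by linear_combination h
    rcases mul_eq_zero.mp this with h' | h'
    · exact absurd h' h2
    · exact h'
  -- slope of doubling
  have hslope : W.slope 1 1 y₁ y₁ = y₁ := by
    rw [Affine.slope_of_Y_ne rfl hyne, hnegY]
    have hden : y₁ - -y₁ = 2 * y₁ := by ring
    rw [hden]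
    have : 3 * (1:F) ^ 2 + 2 * W.a₂ * 1 + W.a₄ - W.a₁ * y₁ = 2 * (c + 2) := by
      simp [hW]; ring
    rw [this, ← hy₁sq]
    field_simp
  -- doubling: Q + Q = P₀
  have hQQ : Q + Q = P₀ := by
    rw [hQ, Affine.Point.add_self_of_Y_ne hyne]
    apply VGTaux.some_eq_some
    · rw [Affine.addX, hslope]
      simp only [hW]
      rw [show y₁ ^ 2 + 0 * y₁ - c - 1 - 1 = y₁ ^ 2 - (c + 2) by ring, hy₁sq]
      ring
    · rw [Affine.addY, Affine.negAddY, Affine.addX, hslope]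
      simp only [Affine.negY, hW]
      rw [show y₁ ^ 2 + 0 * y₁ - c - 1 - 1 = y₁ ^ 2 - (c + 2) by ring, hy₁sq]
      ring
  -- P₀ + P₀ = 0
  have hPP : P₀ + P₀ = 0 := by
    rw [hP₀]
    exact Affine.Point.add_self_of_Y_eq (by simp [Affine.negY, hW])
  have hP₀ne : P₀ ≠ 0 := Affine.Point.some_ne_zero h00
  have hQne : Q ≠ 0 := Affine.Point.some_ne_zero hQns
  -- finiteness
  have : Finite W.Point := Finite.of_injective _ (VGTaux.toOpt_inj (W := W))
  -- order of Q is 4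
  have h4Q : (4 : ℕ) • Q = 0 := by
    have : (4 : ℕ) • Q = (Q + Q) + (Q + Q) := by
      rw [show (4:ℕ) = 2 + 2 by rfl, add_nsmul, two_nsmul]
    rw [this, hQQ, hPP]
  have hord : addOrderOf Q = 4 := by
    have hdvd : addOrderOf Q ∣ 4 := addOrderOf_dvd_of_nsmul_eq_zero h4Q
    have hpos : 0 < addOrderOf Q := addOrderOf_pos Q
    have hle : addOrderOf Q ≤ 4 := Nat.le_of_dvd (by norm_num) hdvd
    set n := addOrderOf Q with hn
    interval_cases n
    · exact absurd (AddMonoid.addOrderOf_eq_one_iff.mp hn.symm) hQne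
    · exfalso
      have h2Q : (2 : ℕ) • Q = 0 := by
        have h' := addOrderOf_nsmul_eq_zero Q
        rwa [← hn] at h'
      rw [two_nsmul, hQQ] at h2Q
      exact hP₀ne h2Q
    · norm_num at hdvd
    · rfl
  have hcard4 : (4 : ℕ) ∣ Nat.card W.Point := hord ▸ addOrderOf_dvd_natCard Q
  -- the equivalence
  set S := {p : F × F //
      p.2 ^ 2 = p.1 ^ 3 + 2 * ((a + 1) / t ^ 2 + a) * p.1 ^ 2 + p.1} with hS
  have e : W.Point ≃ Option S := by
    refine ⟨fun P => ?_, fun o => ?_, ?_, ?_⟩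
    · exact match P with
        | .zero => none
        | @Affine.Point.some _ _ _ x y h => some ⟨(x, y), (heqn x y).mp h.1⟩
    · exact match o with
        | none => 0
        | some ⟨(x, y), hxy⟩ =>
            Affine.Point.some _ _ ((Affine.equation_iff_nonsingular_of_Δ_ne_zero (W := W) hWΔ).mp ((heqn x y).mpr hxy))
    · rintro (_ | @⟨x, y, h⟩) <;> rfl
    · rintro (_ | ⟨⟨x, y⟩, hxy⟩) <;> rfl
  have hcardeq : Nat.card W.Point = Nat.card S + 1 := by
    rw [Nat.card_congr e, Finite.card_option]
  rw [hcardeq] at hcard4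
  omega
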